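/- Let G be a minimal counterexample to Ohba's Conjecture with maximal bad list assignment L, and suppose fewer than k colours are frequent. Then G contains at least γ singletons, where γ = |V(G)| − |C|. -/

import Mathlib

/-- `f` is an acceptable colouring for the list assignment `L` on `G`:
it is proper and each vertex gets a colour from its list. -/
def IsListColoring {V : Type} (G : SimpleGraph V) (L : V → Finset ℕ) (f : V → ℕ) : Prop :=
  (∀ v, f v ∈ L v) ∧ ∀ ⦃u w : V⦄, G.Adj u w → f u ≠ f w

/-- `G` is `L`-colourable. -/
def ListColorable {V : Type} (G : SimpleGraph V) (L : V → Finset ℕ) : Prop :=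
  ∃ f, IsListColoring G L f

/-- `G` is `k`-choosable: `L`-colourable whenever every list has size at least `k`. -/
def Choosable {V : Type} (G : SimpleGraph V) (k : ℕ) : Prop :=
  ∀ L : V → Finset ℕ, (∀ v, k ≤ (L v).card) → ListColorable G L

/-- The list chromatic number of `G`. -/
noncomputable def listChromaticNumber {V : Type} (G : SimpleGraph V) : ℕ :=
  sInf {k | Choosable G k}

open Finset
open scoped Classical

/-- The set `C` of all colours appearing in some list. -/
noncomputable def colorSet {V : Type} [Fintype V] (L : V → Finset ℕ) : Finset ℕ :=
  Finset.univ.biUnion L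

/-- `N_B(c)`: the set of vertices whose list contains the colour `c`. -/
noncomputable def NB {V : Type} [Fintype V] (L : V → Finset ℕ) (c : ℕ) : Finset V :=
  Finset.univ.filter (fun v => c ∈ L v)

/-- `γ = |V(G)| - |C|`. -/
noncomputable def gam (V : Type) [Fintype V] (L : V → Finset ℕ) : ℕ :=
  Fintype.card V - (colorSet L).card

/-- The part (maximal stable set) of the complete multipartite graph with index `i`. -/
noncomputable def part {V : Type} [Fintype V] {k : ℕ} (p : V → Fin k) (i : Fin k) : Finset V :=
  Finset.univ.filter (fun v => p v = i)

/-- `v` is a singleton: the part containing `v` has exactly one element. -/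
def IsSingleton {V : Type} [Fintype V] {k : ℕ} (p : V → Fin k) (v : V) : Prop :=
  (part p (p v)).card = 1

/-- `b`: the number of non-singleton parts. -/
noncomputable def numBigParts {V : Type} [Fintype V] {k : ℕ} (p : V → Fin k) : ℕ :=
  (Finset.univ.filter (fun i : Fin k => 2 ≤ (part p i).card)).card

/-- A colour is globally frequent if it appears in the lists of at least `k+1` vertices. -/
def GloballyFrequent {V : Type} [Fintype V] (L : V → Finset ℕ) (k : ℕ) (c : ℕ) : Prop :=
  k + 1 ≤ (NB L c).card

/-- A colour is frequent among singletons if it appears in the lists of at least `γ`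
singletons. -/
def FrequentAmongSingletons {V : Type} [Fintype V] {k : ℕ} (p : V → Fin k)
    (L : V → Finset ℕ) (c : ℕ) : Prop :=
  gam V L ≤ (Finset.univ.filter (fun v => IsSingleton p v ∧ c ∈ L v)).card

/-- A colour is frequent if it is globally frequent or frequent among singletons. -/
def Frequent {V : Type} [Fintype V] {k : ℕ} (p : V → Fin k) (L : V → Finset ℕ) (c : ℕ) : Prop :=
  GloballyFrequent L k c ∨ FrequentAmongSingletons p L c

/-- A proper colouring `f : V → C` is near-acceptable for `L` if every vertex `v` satisfies
`f v ∈ L v`, or `f v` is frequent and `v` is the unique vertex coloured `f v`. -/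
def NearAcceptable {V : Type} [Fintype V] {k : ℕ} (G : SimpleGraph V) (p : V → Fin k)
    (L : V → Finset ℕ) (f : V → ℕ) : Prop :=
  (∀ v, f v ∈ colorSet L) ∧ (∀ ⦃u w : V⦄, G.Adj u w → f u ≠ f w) ∧
    ∀ v, f v ∈ L v ∨ (Frequent p L (f v) ∧ ∀ u, f u = f v → u = v)

/-- `L` is a maximal bad list assignment: adding any colour of `C` to any list makes `G`
colourable. -/
def MaximalBad {V : Type} [Fintype V] (G : SimpleGraph V) (L : V → Finset ℕ) : Prop :=
  ∀ v c, c ∈ colorSet L → c ∉ L v →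
    ListColorable G (Function.update L v (insert c (L v)))

/-- A minimal counterexample to Ohba's conjecture: `G` is a complete `k`-partite graph
(with part-indexing map `p`) on at most `2k+1` vertices, `L` is a list assignment with all
lists of size at least `k` for which `G` is not `L`-colourable (so `χ_ℓ(G) > k = χ(G)`),
and every graph on fewer vertices satisfies Ohba's conjecture. -/
structure MinCex (V : Type) [Fintype V] (G : SimpleGraph V) (k : ℕ)
    (p : V → Fin k) (L : V → Finset ℕ) : Prop where
  adj_iff : ∀ u v, G.Adj u v ↔ p u ≠ p v
  surj : Function.Surjective p
  card_le : Fintype.card V ≤ 2 * k + 1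
  lists : ∀ v, k ≤ (L v).card
  bad : ¬ ListColorable G L
  minimal : ∀ (W : Type) [Fintype W] (H : SimpleGraph W) (j : ℕ),
    Fintype.card W < Fintype.card V → H.chromaticNumber = (j : ℕ∞) →
    Fintype.card W ≤ 2 * j + 1 → listChromaticNumber H = j

/-- Every graph on a finite vertex type is `|V|`-choosable (via Hall's theorem). -/
lemma choosable_card {W : Type} [Fintype W] (H : SimpleGraph W) :
    Choosable H (Fintype.card W) := by
  classical
  intro L hL
  have hall : ∀ s : Finset W, s.card ≤ (s.biUnion L).card := by
    intro s
    rcases s.eq_empty_or_nonempty with rfl | ⟨x, hx⟩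
    · simp
    · calc s.card ≤ Fintype.card W := Finset.card_le_univ s
        _ ≤ (L x).card := hL x
        _ ≤ (s.biUnion L).card :=
            Finset.card_le_card (fun c hc => Finset.mem_biUnion.2 ⟨x, hx, hc⟩)
  obtain ⟨f, hinj, hmem⟩ := (Finset.all_card_le_biUnion_card_iff_exists_injective L).1 hall
  exact ⟨f, hmem, fun u w huw he => huw.ne (hinj he)⟩

/-- Key claim: for any colour `c` and any non-singleton part, some vertex of the part
misses `c` in its list.  Otherwise one could delete the part and colour it all with `c`. -/
lemma claimA {V : Type} [Fintype V] {G : SimpleGraph V} {k : ℕ} {p : V → Fin k}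
    {L : V → Finset ℕ} (h : MinCex V G k p L) (c : ℕ) (i : Fin k)
    (hi : 2 ≤ (part p i).card) : ∃ v, p v = i ∧ c ∉ L v := by
  classical
  by_contra hcon
  push_neg at hcon
  obtain ⟨k', rfl⟩ : ∃ k', k = k' + 1 := ⟨k - 1, (Nat.succ_pred_eq_of_pos i.pos).symm⟩
  set W := {v : V // p v ≠ i} with hWdef
  set H : SimpleGraph W := G.comap Subtype.val with hHdef
  have hadjH : ∀ u w : W, H.Adj u w ↔ p u.val ≠ p w.val := by
    intro u w
    rw [hHdef, SimpleGraph.comap_adj]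
    exact h.adj_iff _ _
  have hsome : ∀ w : W, ((finSuccEquiv' i) (p w.val)).isSome := by
    intro w
    rw [Option.isSome_iff_ne_none]
    intro hnone
    exact w.prop ((finSuccEquiv' i).injective (hnone.trans (finSuccEquiv'_at i).symm))
  set q : W → Fin k' := fun w => ((finSuccEquiv' i) (p w.val)).get (hsome w) with hqdef
  have hq : ∀ w, (finSuccEquiv' i) (p w.val) = some (q w) :=
    fun w => (Option.some_get (hsome w)).symm
  have hqp : ∀ u w : W, q u = q w → p u.val = p w.val := by
    intro u w huw
    apply (finSuccEquiv' i).injective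
    rw [hq u, hq w, huw]
  have hproper : ∀ {u w : W}, H.Adj u w → q u ≠ q w := by
    intro u w huw hqe
    exact ((hadjH u w).1 huw) (hqp u w hqe)
  have hcol : H.Colorable k' := ⟨SimpleGraph.Coloring.mk q hproper⟩
  have hqsurj : Function.Surjective q := by
    intro j
    obtain ⟨v, hv⟩ := h.surj ((finSuccEquiv' i).symm (some j))
    have hvi : p v ≠ i := by
      intro hcontr
      have h2 : (finSuccEquiv' i) (p v) = some j := by rw [hv, Equiv.apply_symm_apply]
      rw [hcontr, finSuccEquiv'_at] at h2
      exact Option.some_ne_none j h2.symm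
    refine ⟨⟨v, hvi⟩, ?_⟩
    have h3 : (finSuccEquiv' i) (p v) = some j := by rw [hv, Equiv.apply_symm_apply]
    exact Option.some_injective _ ((hq ⟨v, hvi⟩).symm.trans h3)
  obtain ⟨r, hr⟩ := hqsurj.hasRightInverse
  have hrinj : Function.Injective r := hr.injective
  have hclq : H.IsClique ↑(Finset.univ.image r) := by
    intro x hx y hy hxy
    simp only [Finset.coe_image, Set.mem_image, Finset.coe_univ, Set.mem_univ, true_and,
      Set.image_univ, Set.mem_range] at hx hy
    obtain ⟨a, rfl⟩ := hx
    obtain ⟨b, rfl⟩ := hy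
    rw [hadjH]
    intro hpe
    apply hxy
    have hqq : q (r a) = q (r b) :=
      Option.some_injective _
        ((hq (r a)).symm.trans ((congrArg (finSuccEquiv' i) hpe).trans (hq (r b))))
    have hab : a = b := by rw [← hr a, ← hr b, hqq]
    rw [hab]
  have hcardclq : (Finset.univ.image r).card = k' := by
    rw [Finset.card_image_of_injective _ hrinj, Finset.card_univ, Fintype.card_fin]
  have hchrom : H.chromaticNumber = (k' : ℕ∞) := by
    refine le_antisymm hcol.chromaticNumber_le ?_
    have := hclq.card_le_chromaticNumber
    rwa [hcardclq] at this
  have hcardW : Fintype.card W + (part p i).card = Fintype.card V := by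
    have h4 : Fintype.card W = (Finset.univ.filter (fun v : V => p v ≠ i)).card :=
      Fintype.card_subtype _
    rw [h4]
    have h5 := Finset.card_filter_add_card_filter_not
      (s := (Finset.univ : Finset V)) (p := fun v => p v = i)
    rw [Finset.card_univ] at h5
    have h6 : (Finset.univ.filter (fun v => ¬ p v = i)) =
        (Finset.univ.filter (fun v => p v ≠ i)) := by
      apply Finset.filter_congr
      intro v _
      rfl
    rw [h6] at h5
    rw [part]
    omega
  have hlt' : Fintype.card W < Fintype.card V := by omega
  have hle' : Fintype.card W ≤ 2 * k' + 1 := by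
    have := h.card_le
    omega
  have hlist := h.minimal W H k' hlt' hchrom hle'
  have hne : {m | Choosable H m}.Nonempty := ⟨Fintype.card W, choosable_card H⟩
  have hch : Choosable H k' := by
    have hmem := Nat.sInf_mem hne
    rw [show sInf {m | Choosable H m} = listChromaticNumber H from rfl, hlist] at hmem
    exact hmem
  have hL' : ∀ w : W, k' ≤ ((L w.val).erase c).card := by
    intro w
    have h1 := h.lists w.val
    have h2 : (L w.val).card - 1 ≤ ((L w.val).erase c).card :=
      Finset.pred_card_le_card_erase
    omega
  obtain ⟨f', hf'mem, hf'prop⟩ := hch (fun w => (L w.val).erase c) hL'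
  apply h.bad
  refine ⟨fun v => if hv : p v = i then c else f' ⟨v, hv⟩, ?_, ?_⟩
  · intro v
    by_cases hv : p v = i
    · simp only [dif_pos hv]
      exact hcon v hv
    · simp only [dif_neg hv]
      exact Finset.mem_of_mem_erase (hf'mem ⟨v, hv⟩)
  · intro u w hadj hfe
    have hpne := (h.adj_iff u w).1 hadj
    by_cases hu : p u = i <;> by_cases hw : p w = i
    · exact hpne (hu.trans hw.symm)
    · simp only [dif_pos hu, dif_neg hw] at hfe
      exact (Finset.ne_of_mem_erase (hf'mem ⟨w, hw⟩)) hfe.symm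
    · simp only [dif_neg hu, dif_pos hw] at hfe
      exact (Finset.ne_of_mem_erase (hf'mem ⟨u, hu⟩)) hfe
    · simp only [dif_neg hu, dif_neg hw] at hfe
      exact hf'prop (show H.Adj ⟨u, hu⟩ ⟨w, hw⟩ from (hadjH _ _).2 hpne) hfe

/-- If fewer than `k` colours are frequent, then `G` contains at least `γ` singletons. -/

theorem stmt_12 (V : Type) [Fintype V] (G : SimpleGraph V) (k : ℕ) (p : V → Fin k)
    (L : V → Finset ℕ) (h : MinCex V G k p L) (hmax : MaximalBad G L)
    (hfew : ((colorSet L).filter (fun c => Frequent p L c)).card < k) :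
    gam V L ≤ (Finset.univ.filter (fun v => IsSingleton p v)).card := by
  classical
  by_contra hgoal
  push_neg at hgoal
  -- notation
  set n := Fintype.card V with hn
  set C := colorSet L with hC
  set F := C.filter (fun c => Frequent p L c) with hF
  set bigs := Finset.univ.filter (fun i : Fin k => 2 ≤ (part p i).card) with hbigs
  set b := bigs.card with hb
  set S := Finset.univ.filter (fun v => IsSingleton p v) with hS
  set s := S.card with hs
  -- hgoal : s < gam V L
  have hgam : gam V L = n - C.card := rfl
  have hγ1 : 1 ≤ gam V L := by omega
  have hCn : C.card < n := by omega
  have hnCγ : n = C.card + gam V L := by omega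
  -- V is nonempty
  have hnpos : 0 < n := by omega
  have : Nonempty V := by
    rw [← Fintype.card_pos_iff]
    exact hnpos
  obtain ⟨v0⟩ := this
  -- k ≤ |C|
  have hkC : k ≤ C.card := by
    calc k ≤ (L v0).card := h.lists v0
      _ ≤ C.card := Finset.card_le_card
        (by rw [hC, colorSet]; exact Finset.subset_biUnion_of_mem L (Finset.mem_univ v0))
  -- b ≤ k
  have hbk : b ≤ k := by
    calc b ≤ (Finset.univ : Finset (Fin k)).card := Finset.card_le_card (Finset.filter_subset _ _)
      _ = k := by rw [Finset.card_univ, Fintype.card_fin]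
  -- every part is nonempty
  have hparts : ∀ i : Fin k, 1 ≤ (part p i).card := by
    intro i
    obtain ⟨v, hv⟩ := h.surj i
    exact Finset.card_pos.2 ⟨v, by simp [part, hv]⟩
  -- k ≤ s + b
  have hksb : k ≤ s + b := by
    have hsplit := Finset.card_filter_add_card_filter_not
      (s := (Finset.univ : Finset (Fin k))) (p := fun i => (part p i).card = 1)
    rw [Finset.card_univ, Fintype.card_fin] at hsplit
    have heq : (Finset.univ.filter (fun i : Fin k => ¬ (part p i).card = 1)) = bigs := by
      rw [hbigs]
      apply Finset.filter_congr
      intro i _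
      have := hparts i
      constructor
      · intro hne; omega
      · intro h2; omega
    rw [heq] at hsplit
    choose r hr using h.surj
    have hsmall : (Finset.univ.filter (fun i : Fin k => (part p i).card = 1)).card ≤ s := by
      rw [hs, hS]
      apply Finset.card_le_card_of_injOn r
      · intro i hi
        simp only [Finset.mem_coe, Finset.mem_filter, Finset.mem_univ, true_and] at hi ⊢
        rw [IsSingleton, hr i]
        exact hi
      · intro i _ j _ hij
        rw [← hr i, ← hr j, hij]
    omega
  -- the NB bound from claimA
  have hNB : ∀ c : ℕ, (NB L c).card + b ≤ n := by
    intro c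
    have hex : ∀ i : Fin k, ∃ v, 2 ≤ (part p i).card → (p v = i ∧ c ∉ L v) := by
      intro i
      by_cases hi : 2 ≤ (part p i).card
      · obtain ⟨v, hv⟩ := claimA h c i hi
        exact ⟨v, fun _ => hv⟩
      · exact ⟨v0, fun hh => absurd hh hi⟩
    choose g hgspec using hex
    have hsub : bigs.image g ⊆ Finset.univ \ NB L c := by
      intro x hx
      obtain ⟨i, hi, rfl⟩ := Finset.mem_image.1 hx
      have hi2 : 2 ≤ (part p i).card := by
        rw [hbigs] at hi
        exact (Finset.mem_filter.1 hi).2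
      simp only [Finset.mem_sdiff, Finset.mem_univ, true_and, NB, Finset.mem_filter, not_and]
      exact (hgspec i hi2).2
    have hinj : Set.InjOn g ↑bigs := by
      intro i hi j hj hij
      have hi2 : 2 ≤ (part p i).card := by
        have := Finset.mem_coe.1 hi
        rw [hbigs] at this
        exact (Finset.mem_filter.1 this).2
      have hj2 : 2 ≤ (part p j).card := by
        have := Finset.mem_coe.1 hj
        rw [hbigs] at this
        exact (Finset.mem_filter.1 this).2
      rw [← (hgspec i hi2).1, ← (hgspec j hj2).1, hij]
    have hcardT : (bigs.image g).card = b := by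
      rw [Finset.card_image_of_injOn hinj]
    have hle := Finset.card_le_card hsub
    rw [hcardT, Finset.card_sdiff_of_subset (Finset.subset_univ _), Finset.card_univ] at hle
    have h3 : (NB L c).card ≤ n := by
      calc (NB L c).card ≤ (Finset.univ : Finset V).card := Finset.card_le_univ _
        _ = n := by rw [Finset.card_univ]
    omega
  -- double counting
  have hswap : ∑ c ∈ C, (NB L c).card = ∑ v : V, (L v).card := by
    calc ∑ c ∈ C, (NB L c).card
        = ∑ c ∈ C, ∑ v : V, (if c ∈ L v then 1 else 0) := by
          refine Finset.sum_congr rfl fun c _ => ?_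
          rw [NB, Finset.card_filter]
      _ = ∑ v : V, ∑ c ∈ C, (if c ∈ L v then 1 else 0) := Finset.sum_comm
      _ = ∑ v : V, (L v).card := by
          refine Finset.sum_congr rfl fun v _ => ?_
          rw [← Finset.card_filter]
          congr 1
          ext c
          simp only [Finset.mem_filter, hC, colorSet, Finset.mem_biUnion, Finset.mem_univ,
            true_and]
          exact ⟨fun hh => hh.2, fun hh => ⟨⟨v, hh⟩, hh⟩⟩
  have hlow : k * n ≤ ∑ c ∈ C, (NB L c).card := by
    rw [hswap]
    calc k * n = ∑ _v : V, k := by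
          rw [Finset.sum_const, Finset.card_univ, smul_eq_mul, mul_comm]
      _ ≤ ∑ v : V, (L v).card := Finset.sum_le_sum fun v _ => h.lists v
  set Fc := C.filter (fun c => ¬ Frequent p L c) with hFc
  have hFsplit : F.card + Fc.card = C.card := by
    rw [hF, hFc]
    exact Finset.card_filter_add_card_filter_not (fun c => Frequent p L c)
  have hup : ∑ c ∈ C, (NB L c).card ≤ F.card * (n - b) + Fc.card * k := by
    rw [← Finset.sum_filter_add_sum_filter_not C (fun c => Frequent p L c), ← hF, ← hFc]
    apply add_le_add
    · calc ∑ c ∈ F, (NB L c).card ≤ ∑ _c ∈ F, (n - b) :=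
            Finset.sum_le_sum fun c _ => by have := hNB c; omega
        _ = F.card * (n - b) := by rw [Finset.sum_const, smul_eq_mul]
    · calc ∑ c ∈ Fc, (NB L c).card ≤ ∑ _c ∈ Fc, k := by
            refine Finset.sum_le_sum fun c hc => ?_
            have hnf : ¬ Frequent p L c := by
              rw [hFc] at hc
              exact (Finset.mem_filter.1 hc).2
            have hngf : ¬ GloballyFrequent L k c := fun hh => hnf (Or.inl hh)
            rw [GloballyFrequent] at hngf
            omega
        _ = Fc.card * k := by rw [Finset.sum_const, smul_eq_mul]
  -- final arithmetic
  have hkey : k * n ≤ F.card * (n - b) + Fc.card * k := le_trans hlow hup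
  have hbn : b ≤ n := by have := hNB 0; omega
  have hfk : F.card < k := hfew
  have hnle : n ≤ 2 * k + 1 := h.card_le
  have hγs : s < gam V L := hgoal
  -- cast to integers
  zify [hbn] at hkey
  have hz1 : (F.card : ℤ) ≤ (k : ℤ) - 1 := by omega
  have hz2 : (1 : ℤ) ≤ (k : ℤ) + 1 - (b : ℤ) := by
    have : (b : ℤ) ≤ (k : ℤ) := by omega
    linarith
  have hz3 : ((k : ℤ) + 1 - (b : ℤ)) ≤ (gam V L : ℤ) := by
    have h1 : (k : ℤ) ≤ (s : ℤ) + (b : ℤ) := by omega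
    have h2 : (s : ℤ) + 1 ≤ (gam V L : ℤ) := by omega
    linarith
  have hz4 : (n : ℤ) = (C.card : ℤ) + (gam V L : ℤ) := by omega
  have hz5 : (F.card : ℤ) + (Fc.card : ℤ) = (C.card : ℤ) := by omega
  have hz6 : (n : ℤ) ≤ 2 * (k : ℤ) + 1 := by omega
  have hh1 : (0 : ℤ) ≤ ((k : ℤ) - 1 - F.card) * ((k : ℤ) + 1 - b) :=
    mul_nonneg (by linarith) (by linarith)
  have hh2 : (0 : ℤ) ≤ ((gam V L : ℤ) - ((k : ℤ) + 1 - b)) * (k : ℤ) :=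
    mul_nonneg (by linarith) (by positivity)
  have hh3 : (0 : ℤ) ≤ (2 * (k : ℤ) + 1 - n) * (F.card : ℤ) :=
    mul_nonneg (by linarith) (Int.natCast_nonneg _)
  nlinarith [hkey, hh1, hh2, hh3, hz2, hz4, hz5]
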